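/- For natural numbers n ≤ u and real β with 0 ≤ β ≤ 1, the ratio C(u,n) / C(u, ⌊βn⌋) is at least C(u,n)^{1-β} · (β^β / e)^n. -/

import Mathlib

lemma aux_pow_le_choose : ∀ (n u : ℕ), n ≤ u → u ^ n ≤ n ^ n * u.choose n := by
  intro n
  induction n with
  | zero => simp
  | succ n ih =>
    intro u hu
    obtain ⟨v, rfl⟩ : ∃ v, u = v + 1 := ⟨u - 1, by omega⟩
    have hnv : n ≤ v := by omega
    have IH := ih v hnv
    have key : (v + 1) * v.choose n = (v + 1).choose (n + 1) * (n + 1) :=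
      Nat.add_one_mul_choose_eq v n
    have hpos : 0 < n ^ n := by
      rcases Nat.eq_zero_or_pos n with h | h
      · simp [h]
      · exact Nat.pow_pos h
    have step : ((v + 1) * n) ^ n ≤ ((n + 1) * v) ^ n :=
      Nat.pow_le_pow_left (by nlinarith) n
    have main : (v + 1) ^ (n + 1) * n ^ n ≤ ((n + 1) ^ (n + 1) * (v + 1).choose (n + 1)) * n ^ n := by
      calc (v + 1) ^ (n + 1) * n ^ n = (v + 1) * ((v + 1) * n) ^ n := by rw [mul_pow]; ring
        _ ≤ (v + 1) * ((n + 1) * v) ^ n := Nat.mul_le_mul_left _ step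
        _ = (n + 1) ^ n * ((v + 1) * v ^ n) := by rw [mul_pow]; ring
        _ ≤ (n + 1) ^ n * ((v + 1) * (n ^ n * v.choose n)) := by
            exact Nat.mul_le_mul_left _ (Nat.mul_le_mul_left _ IH)
        _ = (n + 1) ^ n * ((v + 1) * v.choose n) * n ^ n := by ring
        _ = (n + 1) ^ n * ((v + 1).choose (n + 1) * (n + 1)) * n ^ n := by rw [key]
        _ = ((n + 1) ^ (n + 1) * (v + 1).choose (n + 1)) * n ^ n := by ring
    exact Nat.le_of_mul_le_mul_right main hpos

lemma aux_core (u n k : ℕ) (β : ℝ) (hβ : 0 < β) (hβ1 : β ≤ 1) (hn : 0 < n) (hk : 0 < k)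
    (hkβ : (k : ℝ) ≤ β * n) (hnu : n ≤ u) :
    β ^ (β * (n : ℝ)) / Real.exp 1 ^ n * ((u : ℝ) ^ k * Real.exp 1 ^ k / (k : ℝ) ^ k) ≤
      ((u : ℝ) / (n : ℝ)) ^ (β * (n : ℝ)) := by
  have hnR : (0 : ℝ) < n := by exact_mod_cast hn
  have hkR : (0 : ℝ) < k := by exact_mod_cast hk
  have huR : (0 : ℝ) < u := by exact_mod_cast (hn.trans_le hnu)
  have hnuR : (n : ℝ) ≤ u := by exact_mod_cast hnu
  have hLpos : 0 < β ^ (β * (n : ℝ)) / Real.exp 1 ^ n * ((u : ℝ) ^ k * Real.exp 1 ^ k / (k : ℝ) ^ k) := by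
    positivity
  have hRpos : 0 < ((u : ℝ) / (n : ℝ)) ^ (β * (n : ℝ)) := by positivity
  rw [← Real.log_le_log_iff hLpos hRpos]
  have eL : Real.log (β ^ (β * (n : ℝ)) / Real.exp 1 ^ n * ((u : ℝ) ^ k * Real.exp 1 ^ k / (k : ℝ) ^ k))
      = β * n * Real.log β - n + (k * Real.log u + k - k * Real.log k) := by
    rw [Real.log_mul (by positivity) (by positivity),
      Real.log_div (by positivity) (by positivity),
      Real.log_div (by positivity) (by positivity),
      Real.log_mul (by positivity) (by positivity),
      Real.log_rpow hβ, Real.log_pow, Real.log_pow, Real.log_pow, Real.log_pow, Real.log_exp]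
    push_cast; ring
  have eR : Real.log (((u : ℝ) / (n : ℝ)) ^ (β * (n : ℝ)))
      = β * n * (Real.log u - Real.log n) := by
    rw [Real.log_rpow (by positivity), Real.log_div (by positivity) (by positivity)]
  rw [eL, eR]
  have hβnpos : 0 < β * n := by positivity
  have f1 : Real.log β + Real.log n ≤ Real.log u := by
    have h := Real.log_le_log hβnpos (le_trans (by nlinarith) hnuR)
    rwa [Real.log_mul (by positivity) (by positivity)] at h
  have f2 : Real.log β + Real.log n - Real.log k ≤ β * n / k - 1 := by
    have h := Real.log_le_sub_one_of_pos (x := β * n / k) (by positivity)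
    rwa [Real.log_div (by positivity) (by positivity),
      Real.log_mul (by positivity) (by positivity)] at h
  have h6 : k * (Real.log β + Real.log n - Real.log k) ≤ β * n - k := by
    have := mul_le_mul_of_nonneg_left f2 hkR.le
    have heq : (k : ℝ) * (β * n / k - 1) = β * n - k := by field_simp
    linarith [heq ▸ this]
  have h5 : 0 ≤ (β * n - k) * (Real.log u - Real.log β - Real.log n) :=
    mul_nonneg (by linarith) (by linarith)
  have f4 : β * n ≤ n := by nlinarith
  nlinarith [h5, h6, f4]

/-- For naturals n ≤ u and real β ∈ [0,1]:
C(u,n)/C(u,⌊βn⌋) ≥ C(u,n)^(1-β) · (β^β/e)^n, with β^β = 1 when β = 0 (rpow). -/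
theorem stmt1 (n u : ℕ) (hnu : n ≤ u) (β : ℝ) (hβ0 : 0 ≤ β) (hβ1 : β ≤ 1) :
    ((u.choose n : ℝ)) / (u.choose ⌊β * (n : ℝ)⌋₊) ≥
      (u.choose n : ℝ) ^ (1 - β) * (β ^ (β : ℝ) / Real.exp 1) ^ n := by
  have hA1 : (1 : ℝ) ≤ (u.choose n : ℝ) := by
    exact_mod_cast Nat.one_le_iff_ne_zero.mpr (Nat.choose_pos hnu).ne'
  have hXnn : 0 ≤ β ^ (β : ℝ) / Real.exp 1 := by positivity
  have hX1 : β ^ (β : ℝ) / Real.exp 1 ≤ 1 := by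
    rw [div_le_one (Real.exp_pos 1)]
    calc β ^ (β : ℝ) ≤ 1 := Real.rpow_le_one hβ0 hβ1 hβ0
      _ ≤ Real.exp 1 := by linarith [Real.add_one_le_exp 1]
  rcases Nat.eq_zero_or_pos ⌊β * (n : ℝ)⌋₊ with h0 | hkpos
  · rw [h0, Nat.choose_zero_right, Nat.cast_one, div_one, ge_iff_le]
    calc (u.choose n : ℝ) ^ (1 - β) * (β ^ (β : ℝ) / Real.exp 1) ^ n
        ≤ (u.choose n : ℝ) ^ (1 - β) * 1 :=
          mul_le_mul_of_nonneg_left (pow_le_one₀ hXnn hX1) (Real.rpow_nonneg (by linarith) _)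
      _ = (u.choose n : ℝ) ^ (1 - β) := mul_one _
      _ ≤ (u.choose n : ℝ) ^ (1 : ℝ) := Real.rpow_le_rpow_of_exponent_le hA1 (by linarith)
      _ = (u.choose n : ℝ) := Real.rpow_one _
  · set k := ⌊β * (n : ℝ)⌋₊ with hkdef
    have h1βn : 1 ≤ β * n := Nat.floor_pos.mp hkpos
    have hβpos : 0 < β := by nlinarith [(Nat.cast_nonneg n : (0 : ℝ) ≤ n)]
    have hnRpos : (0 : ℝ) < n := by nlinarith
    have hnpos : 0 < n := by exact_mod_cast hnRpos
    have hk_le : (k : ℝ) ≤ β * n := Nat.floor_le (by positivity)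
    have hkn : k ≤ n := by
      have : (k : ℝ) ≤ n := by nlinarith
      exact_mod_cast this
    have hku : k ≤ u := hkn.trans hnu
    have hupos : 0 < u := hnpos.trans_le hnu
    have hBpos : (0 : ℝ) < u.choose k := by exact_mod_cast Nat.choose_pos hku
    rw [ge_iff_le, le_div_iff₀ hBpos]
    have hApos : (0 : ℝ) < (u.choose n : ℝ) := by linarith
    have hBle : (u.choose k : ℝ) ≤ (u : ℝ) ^ k * Real.exp 1 ^ k / (k : ℝ) ^ k := by
      have h1 : (u.choose k : ℝ) ≤ (u : ℝ) ^ k / (k.factorial : ℝ) := by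
        have := Nat.choose_le_pow_div (α := ℝ) k u
        push_cast at this ⊢
        exact this
      refine h1.trans ?_
      rw [div_le_div_iff₀ (by positivity) (by positivity)]
      have h2 : (k : ℝ) ^ k ≤ Real.exp 1 ^ k * (k.factorial : ℝ) := by
        have h3 := Real.pow_div_factorial_le_exp (k : ℝ) (Nat.cast_nonneg k) k
        rw [div_le_iff₀ (by positivity)] at h3
        calc (k : ℝ) ^ k ≤ Real.exp k * k.factorial := h3
          _ = Real.exp 1 ^ k * k.factorial := by rw [← Real.exp_nat_mul]; norm_num
      calc (u : ℝ) ^ k * (k : ℝ) ^ k ≤ (u : ℝ) ^ k * (Real.exp 1 ^ k * k.factorial) :=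
            mul_le_mul_of_nonneg_left h2 (by positivity)
        _ = (u : ℝ) ^ k * Real.exp 1 ^ k * k.factorial := by ring
    have hAlb : ((u : ℝ) / (n : ℝ)) ^ (β * (n : ℝ)) ≤ (u.choose n : ℝ) ^ β := by
      have h4 : ((u : ℝ) / (n : ℝ)) ^ n ≤ (u.choose n : ℝ) := by
        have h5' : ((u : ℝ)) ^ n ≤ (n : ℝ) ^ n * (u.choose n : ℝ) := by
          exact_mod_cast aux_pow_le_choose n u hnu
        rw [div_pow, div_le_iff₀ (by positivity)]
        linarith
      have h6 : ((u : ℝ) / (n : ℝ)) ^ ((n : ℕ) : ℝ) ≤ (u.choose n : ℝ) := by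
        rw [Real.rpow_natCast]; exact h4
      calc ((u : ℝ) / (n : ℝ)) ^ (β * (n : ℝ))
          = (((u : ℝ) / (n : ℝ)) ^ ((n : ℝ))) ^ β := by
            rw [← Real.rpow_mul (by positivity), mul_comm]
        _ ≤ (u.choose n : ℝ) ^ β := Real.rpow_le_rpow (by positivity) h6 hβ0
    have hXeq : (β ^ (β : ℝ) / Real.exp 1) ^ n = β ^ (β * (n : ℝ)) / Real.exp 1 ^ n := by
      rw [div_pow, ← Real.rpow_natCast (β ^ (β : ℝ)) n, ← Real.rpow_mul hβ0]
    have key : (β ^ (β : ℝ) / Real.exp 1) ^ n * (u.choose k : ℝ) ≤ (u.choose n : ℝ) ^ β := by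
      calc (β ^ (β : ℝ) / Real.exp 1) ^ n * (u.choose k : ℝ)
          ≤ (β ^ (β : ℝ) / Real.exp 1) ^ n * ((u : ℝ) ^ k * Real.exp 1 ^ k / (k : ℝ) ^ k) :=
            mul_le_mul_of_nonneg_left hBle (by positivity)
        _ = β ^ (β * (n : ℝ)) / Real.exp 1 ^ n * ((u : ℝ) ^ k * Real.exp 1 ^ k / (k : ℝ) ^ k) := by
            rw [hXeq]
        _ ≤ ((u : ℝ) / (n : ℝ)) ^ (β * (n : ℝ)) :=
            aux_core u n k β hβpos hβ1 hnpos hkpos hk_le hnu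
        _ ≤ (u.choose n : ℝ) ^ β := hAlb
    calc (u.choose n : ℝ) ^ (1 - β) * (β ^ (β : ℝ) / Real.exp 1) ^ n * (u.choose k : ℝ)
        = (u.choose n : ℝ) ^ (1 - β) * ((β ^ (β : ℝ) / Real.exp 1) ^ n * (u.choose k : ℝ)) := by
          ring
      _ ≤ (u.choose n : ℝ) ^ (1 - β) * (u.choose n : ℝ) ^ β :=
          mul_le_mul_of_nonneg_left key (Real.rpow_nonneg hApos.le _)
      _ = (u.choose n : ℝ) := by rw [← Real.rpow_add hApos]; norm_num
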